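/- Let 𝔤 = gl(n,ℂ) with Casimir tensor Ω = Σ_{i,j=1}^n E_{ij} ⊗ E_{ji}. For gl(n,ℂ)-modules M₁, …, M_ℓ (ℓ ≥ 2), distinct complex numbers z₁, …, z_ℓ, and M = M₁ ⊗ ⋯ ⊗ M_ℓ, let M^{sing} = {v ∈ M : E_{ij}·v = 0 for all 1 ≤ i < j ≤ n} denote the space spanned by singular vectors, where E_{ij} acts diagonally on M. Then each Gaudin Hamiltonian H^i leaves M^{sing} invariant: H^i(M^{sing}) ⊆ M^{sing}. -/

import Mathlib

open scoped TensorProduct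

/-- The operator `x^{(i)}` on `M₁ ⊗ ⋯ ⊗ M_ℓ` acting as `x` on the `i`-th tensor factor
and as the identity on the others. -/
noncomputable def factorAction {L : Type*} [LieRing L] [LieAlgebra ℂ L]
    {ℓ : ℕ} (M : Fin ℓ → Type*) [∀ j, AddCommGroup (M j)] [∀ j, Module ℂ (M j)]
    [∀ j, LieRingModule L (M j)] [∀ j, LieModule ℂ L (M j)]
    (i : Fin ℓ) (x : L) :
    (⨂[ℂ] j, M j) →ₗ[ℂ] ⨂[ℂ] j, M j :=
  PiTensorProduct.map
    (Function.update (fun j => (LinearMap.id : M j →ₗ[ℂ] M j)) i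
      (LieModule.toEnd ℂ L (M i) x))

/-- `Ω^{(ij)} = Σ_a x_a^{(i)} ∘ (x^a)^{(j)}` on `M₁ ⊗ ⋯ ⊗ M_ℓ`, for a family
`{x_a}` with dual family `{x^a}`. -/
noncomputable def gaudinOmega {L : Type*} [LieRing L] [LieAlgebra ℂ L]
    {ι : Type*} [Fintype ι] (x x' : ι → L)
    {ℓ : ℕ} (M : Fin ℓ → Type*) [∀ j, AddCommGroup (M j)] [∀ j, Module ℂ (M j)]
    [∀ j, LieRingModule L (M j)] [∀ j, LieModule ℂ L (M j)]
    (i j : Fin ℓ) :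
    (⨂[ℂ] k, M k) →ₗ[ℂ] ⨂[ℂ] k, M k :=
  ∑ a : ι, factorAction M i (x a) ∘ₗ factorAction M j (x' a)

/-- The Gaudin Hamiltonian `H^i = Σ_{j ≠ i} Ω^{(ij)}/(z_i − z_j)` on `M₁ ⊗ ⋯ ⊗ M_ℓ`. -/
noncomputable def gaudinH {L : Type*} [LieRing L] [LieAlgebra ℂ L]
    {ι : Type*} [Fintype ι] (x x' : ι → L)
    {ℓ : ℕ} (M : Fin ℓ → Type*) [∀ j, AddCommGroup (M j)] [∀ j, Module ℂ (M j)]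
    [∀ j, LieRingModule L (M j)] [∀ j, LieModule ℂ L (M j)]
    (z : Fin ℓ → ℂ) (i : Fin ℓ) :
    (⨂[ℂ] k, M k) →ₗ[ℂ] ⨂[ℂ] k, M k :=
  ∑ j ∈ Finset.univ.filter (fun j => j ≠ i),
    (z i - z j)⁻¹ • gaudinOmega x x' M i j

/-- The diagonal action of `x ∈ L` on `M₁ ⊗ ⋯ ⊗ M_ℓ`:
`x·(m₁⊗⋯⊗m_ℓ) = Σ_i m₁⊗⋯⊗(x·m_i)⊗⋯⊗m_ℓ`. -/
noncomputable def diagAction {L : Type*} [LieRing L] [LieAlgebra ℂ L]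
    {ℓ : ℕ} (M : Fin ℓ → Type*) [∀ j, AddCommGroup (M j)] [∀ j, Module ℂ (M j)]
    [∀ j, LieRingModule L (M j)] [∀ j, LieModule ℂ L (M j)]
    (x : L) :
    (⨂[ℂ] k, M k) →ₗ[ℂ] ⨂[ℂ] k, M k :=
  ∑ i : Fin ℓ, factorAction M i x

attribute [local instance 100] LieRing.ofAssociativeRing


section aux
variable {L : Type*} [LieRing L] [LieAlgebra ℂ L]
    {ℓ : ℕ} {M : Fin ℓ → Type*} [∀ j, AddCommGroup (M j)] [∀ j, Module ℂ (M j)]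
    [∀ j, LieRingModule L (M j)] [∀ j, LieModule ℂ L (M j)]

/-- generic slot map -/
noncomputable def fA (M : Fin ℓ → Type*) [∀ j, AddCommGroup (M j)] [∀ j, Module ℂ (M j)]
    (i : Fin ℓ) (φ : M i →ₗ[ℂ] M i) : (⨂[ℂ] j, M j) →ₗ[ℂ] ⨂[ℂ] j, M j :=
  PiTensorProduct.map (Function.update (fun j => (LinearMap.id : M j →ₗ[ℂ] M j)) i φ)

lemma fA_comp_same (i : Fin ℓ) (φ ψ : M i →ₗ[ℂ] M i) :
    fA M i φ ∘ₗ fA M i ψ = fA M i (φ ∘ₗ ψ) := by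
  unfold fA
  rw [← PiTensorProduct.map_comp]
  congr 1
  funext k
  by_cases h : k = i
  · subst h; simp
  · simp [Function.update_of_ne h]

lemma fA_comm {i j : Fin ℓ} (h : i ≠ j) (φ : M i →ₗ[ℂ] M i) (ψ : M j →ₗ[ℂ] M j) :
    fA M i φ ∘ₗ fA M j ψ = fA M j ψ ∘ₗ fA M i φ := by
  unfold fA
  rw [← PiTensorProduct.map_comp, ← PiTensorProduct.map_comp]
  congr 1
  funext k
  by_cases hi : k = i
  · subst hi; simp [Function.update_of_ne h]
  · by_cases hj : k = j
    · subst hj; simp [Function.update_of_ne (Ne.symm h)]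
    · simp [Function.update_of_ne hi]

lemma fA_add (i : Fin ℓ) (φ ψ : M i →ₗ[ℂ] M i) :
    fA M i (φ + ψ) = fA M i φ + fA M i ψ :=
  PiTensorProduct.map_update_add _ i φ ψ

lemma fA_sub (i : Fin ℓ) (φ ψ : M i →ₗ[ℂ] M i) :
    fA M i (φ - ψ) = fA M i φ - fA M i ψ := by
  have := fA_add (M := M) i (φ - ψ) ψ
  rw [sub_add_cancel] at this
  rw [this]; abel

lemma factorAction_eq_fA (i : Fin ℓ) (x : L) :
    factorAction M i x = fA M i (LieModule.toEnd ℂ L (M i) x) := rfl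

lemma factorAction_add (i : Fin ℓ) (x y : L) :
    factorAction M i (x + y) = factorAction M i x + factorAction M i y := by
  rw [factorAction_eq_fA, factorAction_eq_fA, factorAction_eq_fA, map_add, fA_add]

lemma factorAction_smul (i : Fin ℓ) (c : ℂ) (x : L) :
    factorAction M i (c • x) = c • factorAction M i x := by
  rw [factorAction_eq_fA, factorAction_eq_fA, map_smul]
  exact PiTensorProduct.map_update_smul _ i c _

lemma factorAction_lie (i : Fin ℓ) (x y : L) :
    factorAction M i ⁅x, y⁆
      = factorAction M i x * factorAction M i y - factorAction M i y * factorAction M i x := by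
  rw [factorAction_eq_fA, LieHom.map_lie, Ring.lie_def]
  have : (LieModule.toEnd ℂ L (M i) x) * (LieModule.toEnd ℂ L (M i) y)
      = (LieModule.toEnd ℂ L (M i) x) ∘ₗ (LieModule.toEnd ℂ L (M i) y) := rfl
  rw [fA_sub, this, ← fA_comp_same]
  have : (LieModule.toEnd ℂ L (M i) y) * (LieModule.toEnd ℂ L (M i) x)
      = (LieModule.toEnd ℂ L (M i) y) ∘ₗ (LieModule.toEnd ℂ L (M i) x) := rfl
  rw [this, ← fA_comp_same]
  rfl

lemma factorAction_comm {i j : Fin ℓ} (h : i ≠ j) (x y : L) :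
    factorAction M i x * factorAction M j y = factorAction M j y * factorAction M i x := by
  rw [factorAction_eq_fA, factorAction_eq_fA]
  exact fA_comm h _ _

/-- The bilinear map `(y, z) ↦ y^{(i)} ∘ z^{(j)}`. -/
noncomputable def biFactor (M : Fin ℓ → Type*) [∀ j, AddCommGroup (M j)] [∀ j, Module ℂ (M j)]
    [∀ j, LieRingModule L (M j)] [∀ j, LieModule ℂ L (M j)] (i j : Fin ℓ) :
    L →ₗ[ℂ] L →ₗ[ℂ] ((⨂[ℂ] k, M k) →ₗ[ℂ] ⨂[ℂ] k, M k) :=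
  LinearMap.mk₂ ℂ (fun y z => factorAction M i y * factorAction M j z)
    (fun y₁ y₂ z => by simp only [factorAction_add, add_mul])
    (fun c y z => by simp only [factorAction_smul, smul_mul_assoc])
    (fun y z₁ z₂ => by simp only [factorAction_add, mul_add])
    (fun c y z => by simp only [factorAction_smul, mul_smul_comm])

/-- Key commutation: the diagonal action commutes with `Ω^{(ij)}` whenever the
Casimir-type invariance identity holds. -/
lemma diag_comm_omega {ι : Type*} [Fintype ι] (xa x' : ι → L)
    {i j : Fin ℓ} (hij : i ≠ j) (x : L)
    (hinv : ∑ a : ι, (biFactor M i j ⁅x, xa a⁆ (x' a) + biFactor M i j (xa a) ⁅x, x' a⁆) = 0) :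
    Commute (diagAction M x) (gaudinOmega xa x' M i j) := by
  unfold Commute SemiconjBy diagAction gaudinOmega
  simp only [← Module.End.mul_eq_comp]
  rw [Finset.sum_mul, Finset.mul_sum]
  rw [← sub_eq_zero, ← Finset.sum_sub_distrib]
  have step : ∀ k : Fin ℓ,
      ((factorAction M k x) * ∑ a : ι, factorAction M i (xa a) * factorAction M j (x' a))
        - ((∑ a : ι, factorAction M i (xa a) * factorAction M j (x' a)) * factorAction M k x)
      = if k = i then ∑ a : ι, biFactor M i j ⁅x, xa a⁆ (x' a)
        else if k = j then ∑ a : ι, biFactor M i j (xa a) ⁅x, x' a⁆ else 0 := by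
    intro k
    rw [Finset.mul_sum, Finset.sum_mul, ← Finset.sum_sub_distrib]
    by_cases hki : k = i
    · subst hki
      rw [if_pos rfl]
      refine Finset.sum_congr rfl fun a _ => ?_
      simp only [biFactor, LinearMap.mk₂_apply, factorAction_lie]
      have h1 : factorAction M k x * factorAction M j (x' a)
          = factorAction M j (x' a) * factorAction M k x := factorAction_comm hij _ _
      rw [sub_mul, ← mul_assoc, mul_assoc (factorAction M k (xa a)), ← h1, ← mul_assoc]
    · by_cases hkj : k = j
      · subst hkj
        rw [if_neg hki, if_pos rfl]
        refine Finset.sum_congr rfl fun a _ => ?_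
        simp only [biFactor, LinearMap.mk₂_apply, factorAction_lie]
        have h1 : factorAction M k x * factorAction M i (xa a)
            = factorAction M i (xa a) * factorAction M k x :=
          factorAction_comm (Ne.symm hij) _ _
        rw [mul_sub, ← mul_assoc, h1, mul_assoc, ← mul_assoc (factorAction M i (xa a))]
        rw [mul_assoc (factorAction M i (xa a)) (factorAction M k (x' a))]
      · rw [if_neg hki, if_neg hkj]
        refine Finset.sum_eq_zero fun a _ => ?_
        have h1 : factorAction M k x * factorAction M i (xa a)
            = factorAction M i (xa a) * factorAction M k x :=
          factorAction_comm (fun h => hki h) _ _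
        have h2 : factorAction M k x * factorAction M j (x' a)
            = factorAction M j (x' a) * factorAction M k x :=
          factorAction_comm (fun h => hkj h) _ _
        rw [← mul_assoc, h1, mul_assoc, h2, ← mul_assoc, sub_self]
  rw [Finset.sum_congr rfl (fun k _ => step k)]
  have split : ∀ k : Fin ℓ,
      (if k = i then ∑ a : ι, biFactor M i j ⁅x, xa a⁆ (x' a)
        else if k = j then ∑ a : ι, biFactor M i j (xa a) ⁅x, x' a⁆ else 0)
      = (if k = i then ∑ a : ι, biFactor M i j ⁅x, xa a⁆ (x' a) else 0)
        + (if k = j then ∑ a : ι, biFactor M i j (xa a) ⁅x, x' a⁆ else 0) := by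
    intro k
    by_cases hki : k = i
    · subst hki; rw [if_pos rfl, if_pos rfl, if_neg hij, add_zero]
    · rw [if_neg hki, if_neg hki, zero_add]
  rw [Finset.sum_congr rfl (fun k _ => split k), Finset.sum_add_distrib,
    Finset.sum_ite_eq' Finset.univ i, Finset.sum_ite_eq' Finset.univ j,
    if_pos (Finset.mem_univ i), if_pos (Finset.mem_univ j), ← Finset.sum_add_distrib]
  exact hinv

end aux

section casimir

local notation "E" => fun (a b : Fin _) => Matrix.single a b (1 : ℂ)

lemma E_mul_E {n : ℕ} (a b c d : Fin n) :
    Matrix.single a b (1 : ℂ) * Matrix.single c d (1 : ℂ)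
      = if b = c then Matrix.single a d (1 : ℂ) else 0 := by
  by_cases h : b = c
  · subst h
    rw [if_pos rfl, Matrix.single_mul_single_same, one_mul]
  · rw [if_neg h]
    exact Matrix.single_mul_single_of_ne (α := ℂ) (h := h) ..

/-- Invariance of the Casimir tensor `Σ_{p,q} E_{pq} ⊗ E_{qp}`, applied through an
arbitrary bilinear map `B`. -/
lemma casimir_invariance {n : ℕ} {W : Type*} [AddCommGroup W] [Module ℂ W]
    (B : Matrix (Fin n) (Fin n) ℂ →ₗ[ℂ] Matrix (Fin n) (Fin n) ℂ →ₗ[ℂ] W)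
    (u v : Fin n) :
    ∑ p : Fin n × Fin n,
      (B ⁅Matrix.single u v (1 : ℂ), Matrix.single p.1 p.2 (1 : ℂ)⁆
          (Matrix.single p.2 p.1 (1 : ℂ))
        + B (Matrix.single p.1 p.2 (1 : ℂ))
            ⁅Matrix.single u v (1 : ℂ), Matrix.single p.2 p.1 (1 : ℂ)⁆) = 0 := by
  simp only [Ring.lie_def, E_mul_E, map_sub, LinearMap.sub_apply]
  have expand : ∀ p : Fin n × Fin n,
      (B (if v = p.1 then Matrix.single u p.2 (1:ℂ) else 0))
          (Matrix.single p.2 p.1 (1:ℂ))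
      - (B (if p.2 = u then Matrix.single p.1 v (1:ℂ) else 0))
          (Matrix.single p.2 p.1 (1:ℂ))
      + ((B (Matrix.single p.1 p.2 (1:ℂ)))
          (if v = p.2 then Matrix.single u p.1 (1:ℂ) else 0)
        - (B (Matrix.single p.1 p.2 (1:ℂ)))
          (if p.1 = u then Matrix.single p.2 v (1:ℂ) else 0))
      = ((if v = p.1 then B (Matrix.single u p.2 (1:ℂ))
            (Matrix.single p.2 p.1 (1:ℂ)) else 0)
          - (if p.2 = u then B (Matrix.single p.1 v (1:ℂ))
            (Matrix.single p.2 p.1 (1:ℂ)) else 0))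
      + ((if v = p.2 then B (Matrix.single p.1 p.2 (1:ℂ))
            (Matrix.single u p.1 (1:ℂ)) else 0)
          - (if p.1 = u then B (Matrix.single p.1 p.2 (1:ℂ))
            (Matrix.single p.2 v (1:ℂ)) else 0)) := by
    intro p
    split_ifs <;> simp
  rw [Finset.sum_congr rfl (fun p _ => expand p)]
  rw [Finset.sum_add_distrib, Finset.sum_sub_distrib, Finset.sum_sub_distrib]
  have h1 : ∑ p : Fin n × Fin n,
      (if v = p.1 then B (Matrix.single u p.2 (1:ℂ))
        (Matrix.single p.2 p.1 (1:ℂ)) else 0)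
      = ∑ q : Fin n, B (Matrix.single u q (1:ℂ)) (Matrix.single q v (1:ℂ)) := by
    rw [Fintype.sum_prod_type_right]
    simp [Finset.sum_ite_eq]
  have h2 : ∑ p : Fin n × Fin n,
      (if p.2 = u then B (Matrix.single p.1 v (1:ℂ))
        (Matrix.single p.2 p.1 (1:ℂ)) else 0)
      = ∑ q : Fin n, B (Matrix.single q v (1:ℂ)) (Matrix.single u q (1:ℂ)) := by
    rw [Fintype.sum_prod_type]
    simp [Finset.sum_ite_eq']
  have h3 : ∑ p : Fin n × Fin n,
      (if v = p.2 then B (Matrix.single p.1 p.2 (1:ℂ))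
        (Matrix.single u p.1 (1:ℂ)) else 0)
      = ∑ q : Fin n, B (Matrix.single q v (1:ℂ)) (Matrix.single u q (1:ℂ)) := by
    rw [Fintype.sum_prod_type]
    simp [Finset.sum_ite_eq]
  have h4 : ∑ p : Fin n × Fin n,
      (if p.1 = u then B (Matrix.single p.1 p.2 (1:ℂ))
        (Matrix.single p.2 v (1:ℂ)) else 0)
      = ∑ q : Fin n, B (Matrix.single u q (1:ℂ)) (Matrix.single q v (1:ℂ)) := by
    rw [Fintype.sum_prod_type_right]
    simp [Finset.sum_ite_eq']
  rw [h1, h2, h3, h4]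
  abel

end casimir

/-- For `𝔤 = gl(n,ℂ)` with Casimir tensor `Ω = Σ_{i,j} E_{ij} ⊗ E_{ji}`, each Gaudin
Hamiltonian `H^k` on `M = M₁ ⊗ ⋯ ⊗ M_ℓ` leaves the space of singular vectors
`M^{sing} = {v : E_{rs}·v = 0 for all r < s}` invariant, where `E_{rs}` acts
diagonally on `M`. -/
theorem gl_gaudin_hamiltonian_preserves_singular_vectors
    (n : ℕ) {ℓ : ℕ} (hℓ : 2 ≤ ℓ)
    (M : Fin ℓ → Type*) [∀ j, AddCommGroup (M j)] [∀ j, Module ℂ (M j)]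
    [∀ j, LieRingModule (Matrix (Fin n) (Fin n) ℂ) (M j)]
    [∀ j, LieModule ℂ (Matrix (Fin n) (Fin n) ℂ) (M j)]
    (z : Fin ℓ → ℂ) (hz : Function.Injective z)
    (k : Fin ℓ) (v : ⨂[ℂ] j, M j)
    (hv : ∀ r s : Fin n, r < s →
      diagAction M (Matrix.single r s (1 : ℂ)) v = 0) :
    ∀ r s : Fin n, r < s →
      diagAction M (Matrix.single r s (1 : ℂ))
        (gaudinH (fun p : Fin n × Fin n => Matrix.single p.1 p.2 (1 : ℂ))
          (fun p : Fin n × Fin n => Matrix.single p.2 p.1 (1 : ℂ))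
          M z k v) = 0 := by
  intro r s hrs
  set x : Matrix (Fin n) (Fin n) ℂ := Matrix.single r s (1 : ℂ) with hxdef
  set xa : Fin n × Fin n → Matrix (Fin n) (Fin n) ℂ :=
    fun p => Matrix.single p.1 p.2 (1 : ℂ) with hxa
  set x' : Fin n × Fin n → Matrix (Fin n) (Fin n) ℂ :=
    fun p => Matrix.single p.2 p.1 (1 : ℂ) with hx'
  have hcomm : Commute (diagAction M x) (gaudinH xa x' M z k) := by
    unfold gaudinH
    apply Commute.sum_right
    intro j hj
    apply Commute.smul_right
    refine diag_comm_omega xa x' (Ne.symm (Finset.mem_filter.mp hj).2) x ?_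
    exact casimir_invariance (biFactor M k j) r s
  have h1 : diagAction M x (gaudinH xa x' M z k v)
      = (diagAction M x * gaudinH xa x' M z k) v := rfl
  rw [h1, hcomm, Module.End.mul_apply, hv r s hrs, map_zero]
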